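/- Let n = 1 + Σᵢ 2nᵢ and define λ̄(Y) = (∏ᵢ Yᵢ^{−2nᵢ/n}) · Σᵢ(2nᵢpᵢYᵢ − (1/2)nᵢqᵢ²Yᵢ²) for Y ∈ ℝ^m_{>0}. If Y(u) solves dYᵢ/du = −YᵢFᵢ(Y), then (∏ᵢYᵢ^{−2nᵢ/n})^{−1} · d/du λ̄(Y(u)) = (2/n)(2Σᵢ nᵢpᵢYᵢ − E(Y)/2)² − E(Y)²/2 − Σᵢ nᵢYᵢ²(2pᵢ − qᵢ²Yᵢ)². -/

import Mathlib

open BigOperators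

/-- E(Y) = Σᵢ nᵢ qᵢ² Yᵢ². -/
def flowE (m : ℕ) (n : Fin m → ℕ) (q : Fin m → ℝ) (Y : Fin m → ℝ) : ℝ :=
  ∑ j, (n j : ℝ) * q j ^ 2 * Y j ^ 2

/-- Fᵢ(Y) = 2pᵢYᵢ − qᵢ²Yᵢ² − E(Y). -/
def flowF (m : ℕ) (n : Fin m → ℕ) (p q : Fin m → ℝ) (i : Fin m) (Y : Fin m → ℝ) : ℝ :=
  2 * p i * Y i - q i ^ 2 * Y i ^ 2 - flowE m n q Y

/-- n = 1 + Σᵢ 2nᵢ. -/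
def nTot (m : ℕ) (n : Fin m → ℕ) : ℝ := 1 + ∑ i, 2 * (n i : ℝ)

/-- λ̄(Y) = (∏ᵢ Yᵢ^{−2nᵢ/n}) · Σᵢ (2nᵢpᵢYᵢ − ½nᵢqᵢ²Yᵢ²). -/
noncomputable def lamBar (m : ℕ) (n : Fin m → ℕ) (p q : Fin m → ℝ) (Y : Fin m → ℝ) : ℝ :=
  (∏ i, Y i ^ (-(2 * (n i : ℝ)) / nTot m n)) *
    ∑ i, (2 * (n i : ℝ) * p i * Y i - (1 / 2) * (n i : ℝ) * q i ^ 2 * Y i ^ 2)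

/-- derivative formula for λ̄ along the flow dYᵢ/du = −YᵢFᵢ(Y). -/
theorem stmt7 (m : ℕ) (n : Fin m → ℕ) (p q : Fin m → ℝ)
    (hn : ∀ i, 0 < n i) (hp : ∀ i, 0 < p i) (hq : ∀ i, q i ≠ 0)
    (Y : ℝ → Fin m → ℝ) (u : ℝ)
    (hpos : ∀ i, 0 < Y u i)
    (hd : ∀ i, HasDerivAt (fun s => Y s i) (-(Y u i) * flowF m n p q i (Y u)) u) :
    HasDerivAt (fun s => lamBar m n p q (Y s))
      ((∏ i, (Y u i) ^ (-(2 * (n i : ℝ)) / nTot m n)) *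
        ((2 / nTot m n) * (2 * (∑ i, (n i : ℝ) * p i * Y u i) - flowE m n q (Y u) / 2) ^ 2
          - (flowE m n q (Y u)) ^ 2 / 2
          - ∑ i, (n i : ℝ) * (Y u i) ^ 2 * (2 * p i - q i ^ 2 * Y u i) ^ 2)) u := by
  classical
  set nn : ℝ := nTot m n with hnn_def
  set Yu : Fin m → ℝ := Y u with hYu
  have hne : ∀ i, Yu i ≠ 0 := fun i => (hpos i).ne'
  set α : Fin m → ℝ := fun i => -(2 * (n i : ℝ)) / nn with hα
  set E : ℝ := flowE m n q Yu with hE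
  set a : Fin m → ℝ := fun i => 2 * p i * Yu i - q i ^ 2 * Yu i ^ 2 with ha
  set Fv : Fin m → ℝ := fun i => flowF m n p q i Yu with hFv
  have hF : ∀ i, Fv i = a i - E := fun i => rfl
  set Pval : ℝ := ∏ i, Yu i ^ α i with hPval
  set B : ℝ := ∑ i, (n i : ℝ) * a i with hB
  set N : ℝ := ∑ i, (n i : ℝ) with hN
  set Q2 : ℝ := ∑ i, (n i : ℝ) * a i ^ 2 with hQ2
  -- nn = 1 + 2N, nn ≠ 0
  have hnnN : nn = 1 + 2 * N := by
    rw [hnn_def, nTot, hN, Finset.mul_sum]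
  have hN0 : 0 ≤ N := Finset.sum_nonneg fun i _ => by positivity
  have hnn0 : nn ≠ 0 := by rw [hnnN]; nlinarith
  -- derivative of the product part
  have hprod : HasDerivAt (fun s => ∏ i, Y s i ^ α i)
      (Pval * ∑ i, α i * (-(Fv i))) u := by
    have h1 : ∀ i ∈ Finset.univ, HasDerivAt (fun s => Y s i ^ α i)
        ((-(Yu i) * Fv i) * α i * Yu i ^ (α i - 1)) u :=
      fun i _ => (hd i).rpow_const (Or.inl (hne i))
    have h2 := HasDerivAt.fun_finsetProd h1
    convert h2 using 1
    case e'_4 => rfl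
    case e'_5 => rfl
    rw [Finset.mul_sum]
    refine Finset.sum_congr rfl fun i _ => ?_
    rw [smul_eq_mul, Real.rpow_sub_one (hne i)]
    have h3 : -(Yu i) * Fv i * α i * (Yu i ^ α i / Yu i)
        = (α i * -(Fv i)) * ((Yu i ^ α i / Yu i) * Yu i) := by ring
    rw [h3, div_mul_cancel₀ _ (hne i), hPval,
      ← Finset.mul_prod_erase Finset.univ _ (Finset.mem_univ i)]
    ring
  -- derivative of the sum part
  have hsum : HasDerivAt
      (fun s => ∑ i, (2 * (n i : ℝ) * p i * Y s i - (1 / 2) * (n i : ℝ) * q i ^ 2 * (Y s i) ^ 2))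
      (∑ i, ((n i : ℝ) * a i * (-(Fv i)))) u := by
    have h1 : ∀ i ∈ Finset.univ, HasDerivAt
        (fun s => 2 * (n i : ℝ) * p i * Y s i - (1 / 2) * (n i : ℝ) * q i ^ 2 * (Y s i) ^ 2)
        ((n i : ℝ) * a i * (-(Fv i))) u := by
      intro i _
      have := (((hd i).const_mul (2 * (n i : ℝ) * p i))).fun_sub
        (((hd i).fun_pow 2).const_mul ((1 / 2) * (n i : ℝ) * q i ^ 2))
      convert this using 1
      case e'_4 => rfl
      case e'_5 => rfl
      simp only [ha, pow_one, Nat.cast_ofNat]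
      ring
    exact HasDerivAt.fun_sum h1
  have hmul := hprod.fun_mul hsum
  -- it's the right function
  have hfun : (fun s => lamBar m n p q (Y s)) =
      fun s => (∏ i, Y s i ^ α i) *
        ∑ i, (2 * (n i : ℝ) * p i * Y s i - (1 / 2) * (n i : ℝ) * q i ^ 2 * (Y s i) ^ 2) := by
    funext s; rfl
  rw [hfun]
  convert hmul using 1
  case e'_4 => rfl
  case e'_5 => rfl
  -- now the algebraic identity
  set Sval : ℝ := ∑ i, (2 * (n i : ℝ) * p i * Yu i - (1 / 2) * (n i : ℝ) * q i ^ 2 * Yu i ^ 2)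
    with hSval
  have hC : (∑ i, α i * (-(Fv i))) = (2 / nn) * (B - N * E) := by
    rw [hB, hN, Finset.sum_mul, ← Finset.sum_sub_distrib, Finset.mul_sum]
    refine Finset.sum_congr rfl fun i _ => ?_
    rw [hF]
    simp only [hα]
    field_simp
  have hSB : Sval = B + E / 2 := by
    rw [hSval, hB, hE, flowE, Finset.sum_div, ← Finset.sum_add_distrib]
    refine Finset.sum_congr rfl fun i _ => ?_
    simp only [ha]; ring
  have hD : (∑ i, ((n i : ℝ) * a i * (-(Fv i)))) = -(Q2 - E * B) := by
    rw [hQ2, hB, neg_sub, Finset.mul_sum, ← Finset.sum_sub_distrib]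
    refine Finset.sum_congr rfl fun i _ => ?_
    rw [hF]; ring
  have hBE : B = 2 * (∑ i, (n i : ℝ) * p i * Yu i) - E := by
    rw [hB, hE, flowE, Finset.mul_sum, ← Finset.sum_sub_distrib]
    refine Finset.sum_congr rfl fun i _ => ?_
    simp only [ha]; ring
  have hP1 : 2 * (∑ i, (n i : ℝ) * p i * Yu i) - E / 2 = B + E / 2 := by
    rw [hBE]; ring
  have hQ2' : (∑ i, (n i : ℝ) * Yu i ^ 2 * (2 * p i - q i ^ 2 * Yu i) ^ 2) = Q2 := by
    rw [hQ2]
    refine Finset.sum_congr rfl fun i _ => ?_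
    simp only [ha]; ring
  have hPval' : (∏ i, Y u i ^ α i) = Pval := rfl
  rw [hC, hD, hP1, hQ2', hPval', hSB, hnnN]
  have h2N : (1 : ℝ) + 2 * N ≠ 0 := by nlinarith
  field_simp
  ring
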